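/- arXiv:1807.01261 — 2 statements merged into one kernel-verified Lean document; each statement's English description precedes it below -/
import Mathlib

section
/- Construction of an entropy conservative residual distribution/FR scheme: Let S be a nonempty finite set (the degrees of freedom of an element), p ≥ 1, and v : S → ℝ^p with mean v̄ = (1/|S|)·Σ_{σ∈S} v_σ, and assume Σ_{σ∈S} ‖v_σ − v̄‖² ≠ 0. Let Φ : S → ℝ^p be any family of residuals and G ∈ ℝ (the boundary entropy-flux quadrature value). Define the entropy error E = G − Σ_{σ∈S} ⟨v_σ, Φ_σ⟩, the scalar α = E / (Σ_{σ∈S} ‖v_σ − v̄‖²), and the correction τ_σ = α·(v_σ − v̄). Then the corrected residuals Φ_σ^{CS} = Φ_σ + τ_σ satisfy: (i) conservation, Σ_{σ∈S} Φ_σ^{CS} = Σ_{σ∈S} Φ_σ, and (ii) the entropy conservation relation Σ_{σ∈S} ⟨v_σ, Φ_σ^{CS}⟩ = G. -/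
open RealInnerProductSpace

/-- Construction of an entropy conservative residual distribution/FR scheme:
the corrected residuals `Φ^{CS} = Φ + τ` with `τ_σ = α • (v_σ - v̄)`,
`α = E / Σ ‖v_σ - v̄‖²`, `E = G - Σ ⟪v_σ, Φ_σ⟫`, are conservative and
satisfy the entropy conservation relation. -/
theorem entropy_conservative_correction
    {S : Type*} [Fintype S] [Nonempty S] {p : ℕ} (hp : 1 ≤ p)
    (v Φ : S → EuclideanSpace ℝ (Fin p)) (G : ℝ)
    (vbar : EuclideanSpace ℝ (Fin p))
    (hvbar : vbar = (Fintype.card S : ℝ)⁻¹ • ∑ σ, v σ)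
    (hden : ∑ σ, ‖v σ - vbar‖ ^ 2 ≠ 0)
    (E α : ℝ)
    (hE : E = G - ∑ σ, ⟪v σ, Φ σ⟫)
    (hα : α = E / ∑ σ, ‖v σ - vbar‖ ^ 2)
    (τ ΦCS : S → EuclideanSpace ℝ (Fin p))
    (hτ : ∀ σ, τ σ = α • (v σ - vbar))
    (hΦCS : ∀ σ, ΦCS σ = Φ σ + τ σ) :
    (∑ σ, ΦCS σ = ∑ σ, Φ σ) ∧ (∑ σ, ⟪v σ, ΦCS σ⟫ = G) := by
  have hcard : (Fintype.card S : ℝ) ≠ 0 := by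
    exact_mod_cast Fintype.card_ne_zero
  have hsum0 : ∑ σ, (v σ - vbar) = 0 := by
    rw [Finset.sum_sub_distrib, Finset.sum_const, hvbar]
    simp [← Nat.cast_smul_eq_nsmul ℝ, smul_smul, hcard]
  constructor
  · simp only [hΦCS, Finset.sum_add_distrib, hτ, ← Finset.smul_sum, hsum0,
      smul_zero, add_zero]
  · have key : ∑ σ, ⟪v σ, v σ - vbar⟫ = ∑ σ, ‖v σ - vbar‖ ^ 2 := by
      have h1 : ∑ σ, ⟪v σ - vbar, v σ - vbar⟫ = ∑ σ, ‖v σ - vbar‖ ^ 2 := by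
        simp only [real_inner_self_eq_norm_sq]
      have h2 : ∑ σ, ⟪vbar, v σ - vbar⟫ = 0 := by
        rw [← inner_sum, hsum0, inner_zero_right]
      calc ∑ σ, ⟪v σ, v σ - vbar⟫
          = ∑ σ, (⟪v σ - vbar, v σ - vbar⟫ + ⟪vbar, v σ - vbar⟫) := by
            congr 1; ext σ; rw [← inner_add_left, sub_add_cancel]
        _ = ∑ σ, ‖v σ - vbar‖ ^ 2 := by
            rw [Finset.sum_add_distrib, h1, h2, add_zero]
    simp only [hΦCS, hτ, inner_add_right, Finset.sum_add_distrib,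
      real_inner_smul_right, ← Finset.mul_sum, key, hα, hE]
    field_simp
    ring
end

section
/- Entropy stability of flux reconstruction schemes under Tadmor-type conditions (conclusion of the appendix, discrete quadrature form): Let S and Q be finite sets, p, d ≥ 1. Let v : S → ℝ^p, θ : S → ℝ^d, F : S × S → ℝ^p antisymmetric, and n̂ : S × S → ℝ^d antisymmetric; let w : Q → ℝ, and for q ∈ Q let v_q, v⁻_q ∈ ℝ^p, Θ_q, Θ⁻_q ∈ ℝ^d, n_q ∈ ℝ^d, f̂_q ∈ ℝ^p; set ĝ_q = ⟨(v_q+v⁻_q)/2, f̂_q⟩ − ⟨(Θ_q+Θ⁻_q)/2, n_q⟩. Define the residuals Φ_σ = Σ_{σ'∈S} F(σ,σ') + b_σ with b : S → ℝ^p satisfying Σ_{σ∈S} ⟨v_σ, b_σ⟩ = Σ_{q∈Q} w_q ⟨v_q, f̂_q⟩. Assume: (i) w_q ≥ 0 and the Tadmor boundary condition ⟨v⁻_q − v_q, f̂_q⟩ − ⟨Θ⁻_q − Θ_q, n_q⟩ ≤ 0 for every q ∈ Q; (ii) the interior Tadmor-type condition (1/2)·Σ_{σ,σ'∈S} ( ⟨v_σ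 − v_{σ'}, F(σ,σ')⟩ − ⟨θ_σ − θ_{σ'}, n̂(σ,σ')⟩ ) ≥ 0; (iii) the compatibility relation Σ_{q∈Q} w_q ⟨Θ_q, n_q⟩ = −Σ_{σ∈S} ⟨θ_σ, Σ_{σ'∈S} n̂(σ,σ')⟩. Then the entropy stability inequality Σ_{σ∈S} ⟨v_σ, Φ_σ⟩ ≥ Σ_{q∈Q} w_q ĝ_q holds. -/
open RealInnerProductSpace

lemma double_sum_antisym_inner {S : Type*} [Fintype S]
    {E : Type*} [NormedAddCommGroup E] [InnerProductSpace ℝ E]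
    (u : S → E) (G : S → S → E) (hG : ∀ σ σ', G σ' σ = -G σ σ') :
    ∑ σ, ∑ σ', (⟪u σ - u σ', G σ σ'⟫ : ℝ) = 2 * ∑ σ, ∑ σ', (⟪u σ, G σ σ'⟫ : ℝ) := by
  have hswap : ∑ σ, ∑ σ', (⟪u σ', G σ σ'⟫ : ℝ)
      = -∑ σ, ∑ σ', (⟪u σ, G σ σ'⟫ : ℝ) := by
    rw [Finset.sum_comm]
    simp_rw [← Finset.sum_neg_distrib]
    refine Finset.sum_congr rfl fun σ _ => Finset.sum_congr rfl fun σ' _ => ?_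
    rw [hG σ σ', inner_neg_right]
  simp_rw [inner_sub_left, Finset.sum_sub_distrib]
  rw [hswap]; ring

/-- Entropy stability of flux reconstruction schemes under Tadmor-type
conditions (conclusion of the appendix, discrete quadrature form). -/
theorem entropy_stability_tadmor
    {S Q : Type*} [Fintype S] [Fintype Q] {p d : ℕ} (hp : 1 ≤ p) (hd : 1 ≤ d)
    (v : S → EuclideanSpace ℝ (Fin p))
    (θ : S → EuclideanSpace ℝ (Fin d))
    (F : S → S → EuclideanSpace ℝ (Fin p))
    (hF : ∀ σ σ', F σ' σ = -F σ σ')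
    (nhat : S → S → EuclideanSpace ℝ (Fin d))
    (hnhat : ∀ σ σ', nhat σ' σ = -nhat σ σ')
    (w : Q → ℝ)
    (vq vmq : Q → EuclideanSpace ℝ (Fin p))
    (Θq Θmq nq : Q → EuclideanSpace ℝ (Fin d))
    (fq : Q → EuclideanSpace ℝ (Fin p))
    (gq : Q → ℝ)
    (hg : ∀ q, gq q = ⟪(1 / 2 : ℝ) • (vq q + vmq q), fq q⟫
      - ⟪(1 / 2 : ℝ) • (Θq q + Θmq q), nq q⟫)
    (b : S → EuclideanSpace ℝ (Fin p))
    (Φ : S → EuclideanSpace ℝ (Fin p))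
    (hΦ : ∀ σ, Φ σ = (∑ σ', F σ σ') + b σ)
    (hb : ∑ σ, ⟪v σ, b σ⟫ = ∑ q, w q * ⟪vq q, fq q⟫)
    (hw : ∀ q, 0 ≤ w q)
    (hTadmorBd : ∀ q, ⟪vmq q - vq q, fq q⟫ - ⟪Θmq q - Θq q, nq q⟫ ≤ 0)
    (hTadmorInt : 0 ≤ (1 / 2 : ℝ) *
      ∑ σ, ∑ σ', (⟪v σ - v σ', F σ σ'⟫ - ⟪θ σ - θ σ', nhat σ σ'⟫))
    (hcompat : ∑ q, w q * ⟪Θq q, nq q⟫ = -∑ σ, ⟪θ σ, ∑ σ', nhat σ σ'⟫) :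
    ∑ σ, ⟪v σ, Φ σ⟫ ≥ ∑ q, w q * gq q := by
  set T1 : ℝ := ∑ σ, ∑ σ', (⟪v σ, F σ σ'⟫ : ℝ) with hT1
  set T2 : ℝ := ∑ σ, ∑ σ', (⟪θ σ, nhat σ σ'⟫ : ℝ) with hT2
  have hv : ∑ σ, ∑ σ', (⟪v σ - v σ', F σ σ'⟫ : ℝ) = 2 * T1 :=
    double_sum_antisym_inner v F hF
  have hθ : ∑ σ, ∑ σ', (⟪θ σ - θ σ', nhat σ σ'⟫ : ℝ) = 2 * T2 :=
    double_sum_antisym_inner θ nhat hnhat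
  have hInt : T2 ≤ T1 := by
    have := hTadmorInt
    rw [Finset.sum_congr rfl fun σ _ => Finset.sum_sub_distrib _ _] at this
    rw [Finset.sum_sub_distrib, hv, hθ] at this
    linarith
  have hcompat' : ∑ q, w q * ⟪Θq q, nq q⟫ = -T2 := by
    rw [hcompat, hT2]
    congr 1
    exact Finset.sum_congr rfl fun σ _ => inner_sum _ _ _
  have hLHS : ∑ σ, ⟪v σ, Φ σ⟫ = T1 + ∑ q, w q * ⟪vq q, fq q⟫ := by
    simp_rw [hΦ, inner_add_right, Finset.sum_add_distrib, hb]
    congr 1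
    exact Finset.sum_congr rfl fun σ _ => inner_sum _ _ _
  have h1 : ∀ q, w q * gq q ≤ w q * (⟪vq q, fq q⟫ - ⟪Θq q, nq q⟫) := by
    intro q
    have hbd := hTadmorBd q
    rw [inner_sub_left, inner_sub_left] at hbd
    have hgq := hg q
    rw [real_inner_smul_left, real_inner_smul_left, inner_add_left, inner_add_left] at hgq
    nlinarith [hw q]
  have h2 : ∑ q, w q * gq q ≤ ∑ q, w q * ⟪vq q, fq q⟫ + T2 := by
    calc ∑ q, w q * gq q ≤ ∑ q, w q * (⟪vq q, fq q⟫ - ⟪Θq q, nq q⟫) :=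
          Finset.sum_le_sum fun q _ => h1 q
      _ = ∑ q, w q * ⟪vq q, fq q⟫ - ∑ q, w q * ⟪Θq q, nq q⟫ := by
          simp_rw [mul_sub, Finset.sum_sub_distrib]
      _ = ∑ q, w q * ⟪vq q, fq q⟫ + T2 := by rw [hcompat']; ring
  rw [hLHS]; linarith
end
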